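/- arXiv:2006.10818 — 2 statements merged into one kernel-verified Lean document; each statement's English description precedes it below -/
import Mathlib

section
/- (Optimality of flexible AB-GMRES.) Let A ∈ ℝ^{m×n}, b ∈ ℝ^m, x₀ ∈ ℝ^n, r₀ = b − A x₀ and β = ‖r₀‖₂ with β ≠ 0. Let Z_k ∈ ℝ^{n×k}, let V_{k+1} ∈ ℝ^{m×(k+1)} have orthonormal columns with first column v₁ = r₀/β, and let H̄_k ∈ ℝ^{(k+1)×k} satisfy A Z_k = V_{k+1} H̄_k. Let y_k ∈ ℝ^k minimize ‖β e₁ − H̄_k y‖₂ over y ∈ ℝ^k, and set x_k = x₀ + Z_k y_k. Then x_k minimizes the residual norm over the affine space x₀ + range(Z_k): for every y ∈ ℝ^k, ‖b − A x_k‖₂ ≤ ‖b − A(x₀ + Z_k y)‖₂. -/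
open Matrix

/-- The Euclidean norm on `ℝ^n`. -/
noncomputable def euclNorm {n : ℕ} (x : Fin n → ℝ) : ℝ :=
  Real.sqrt (∑ i, x i ^ 2)

lemma euclNorm_mulVec_orth {m k : ℕ} (V : Matrix (Fin m) (Fin k) ℝ)
    (hVtV : Vᵀ * V = 1) (w : Fin k → ℝ) :
    euclNorm (V.mulVec w) = euclNorm w := by
  unfold euclNorm
  congr 1
  have h1 : ∑ i, (V.mulVec w) i ^ 2 = (V.mulVec w) ⬝ᵥ (V.mulVec w) := by
    simp [dotProduct, sq]
  have h2 : ∑ i, w i ^ 2 = w ⬝ᵥ w := by simp [dotProduct, sq]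
  rw [h1, h2, Matrix.dotProduct_mulVec, Matrix.vecMul_mulVec, hVtV, Matrix.vecMul_one]

lemma residual_eq {m n k : ℕ}
    (A : Matrix (Fin m) (Fin n) ℝ) (b : Fin m → ℝ) (x₀ : Fin n → ℝ)
    (r₀ : Fin m → ℝ) (β : ℝ)
    (hr₀ : r₀ = b - A.mulVec x₀) (hβ0 : β ≠ 0)
    (Z : Matrix (Fin n) (Fin k) ℝ) (V : Matrix (Fin m) (Fin (k + 1)) ℝ)
    (Hbar : Matrix (Fin (k + 1)) (Fin k) ℝ)
    (hv₁ : ∀ i, V i 0 = r₀ i / β)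
    (hAZ : A * Z = V * Hbar) (y : Fin k → ℝ) :
    b - A.mulVec (x₀ + Z.mulVec y) =
      V.mulVec (β • (Pi.single (0 : Fin (k + 1)) (1 : ℝ) : Fin (k + 1) → ℝ) -
        Hbar.mulVec y) := by
  have hr : r₀ = V.mulVec (β • (Pi.single (0 : Fin (k + 1)) (1 : ℝ) : Fin (k + 1) → ℝ)) := by
    funext i
    rw [Matrix.mulVec_smul]
    have : V.mulVec ((Pi.single (0 : Fin (k + 1)) (1 : ℝ) : Fin (k + 1) → ℝ)) i = V i 0 := by
      simp [Matrix.mulVec, dotProduct, Pi.single_apply]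
    simp only [Pi.smul_apply, this, hv₁ i, smul_eq_mul]
    field_simp
  have key : A.mulVec (Z.mulVec y) = V.mulVec (Hbar.mulVec y) := by
    rw [Matrix.mulVec_mulVec, Matrix.mulVec_mulVec, hAZ]
  rw [Matrix.mulVec_add, Matrix.mulVec_sub, ← hr, key]
  rw [hr₀]
  abel

/-- Optimality of flexible AB-GMRES: if `V_{k+1}` has orthonormal columns with first column
`v₁ = r₀ / β`, `r₀ = b - A x₀`, `β = ‖r₀‖₂ ≠ 0`, `A Z_k = V_{k+1} H̄_k`, and `y_k` minimizes
`‖β e₁ - H̄_k y‖₂`, then `x_k = x₀ + Z_k y_k` minimizes the residual norm over the affine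
space `x₀ + range Z_k`. -/
theorem fgmres_optimality {m n k : ℕ}
    (A : Matrix (Fin m) (Fin n) ℝ) (b : Fin m → ℝ) (x₀ : Fin n → ℝ)
    (r₀ : Fin m → ℝ) (β : ℝ)
    (hr₀ : r₀ = b - A.mulVec x₀) (hβ : β = euclNorm r₀) (hβ0 : β ≠ 0)
    (Z : Matrix (Fin n) (Fin k) ℝ) (V : Matrix (Fin m) (Fin (k + 1)) ℝ)
    (Hbar : Matrix (Fin (k + 1)) (Fin k) ℝ)
    (hVtV : Vᵀ * V = 1)
    (hv₁ : ∀ i, V i 0 = r₀ i / β)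
    (hAZ : A * Z = V * Hbar)
    (yk : Fin k → ℝ)
    (hyk : ∀ y : Fin k → ℝ,
      euclNorm (β • (Pi.single (0 : Fin (k + 1)) (1 : ℝ) : Fin (k + 1) → ℝ) -
          Hbar.mulVec yk) ≤
        euclNorm (β • (Pi.single (0 : Fin (k + 1)) (1 : ℝ) : Fin (k + 1) → ℝ) -
          Hbar.mulVec y)) :
    ∀ y : Fin k → ℝ,
      euclNorm (b - A.mulVec (x₀ + Z.mulVec yk)) ≤
        euclNorm (b - A.mulVec (x₀ + Z.mulVec y)) := by
  intro y
  rw [residual_eq A b x₀ r₀ β hr₀ hβ0 Z V Hbar hv₁ hAZ yk,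
      residual_eq A b x₀ r₀ β hr₀ hβ0 Z V Hbar hv₁ hAZ y,
      euclNorm_mulVec_orth V hVtV, euclNorm_mulVec_orth V hVtV]
  exact hyk y
end

section
/- (Breakdown characterization for flexible AB-GMRES, converse direction.) Let A ∈ ℝ^{m×n}, b ∈ ℝ^m, x₀ ∈ ℝ^n, r₀ = b − A x₀ and β = ‖r₀‖₂ with β ≠ 0. Let Z_k ∈ ℝ^{n×k}, let V_{k+1} ∈ ℝ^{m×(k+1)} have orthonormal columns with first column v₁ = r₀/β, and let H̄_k ∈ ℝ^{(k+1)×k} be upper Hessenberg (entries h_{ij} with h_{ij} = 0 for i > j + 1) with h_{i+1,i} ≠ 0 for 1 ≤ i ≤ k−1, satisfying A Z_k = V_{k+1} H̄_k. If some y ∈ ℝ^k makes x = x₀ + Z_k y satisfy A x = b, then h_{k+1,k} = 0. -/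
open Matrix

/-- Breakdown characterization for flexible AB-GMRES (converse direction): with `β ≠ 0`,
`V_{k+1}` having orthonormal columns and first column `v₁ = r₀ / β`, and `H̄_k` upper
Hessenberg with nonzero subdiagonal entries `h_{i+1,i}` for `i < k` satisfying
`A Z_k = V_{k+1} H̄_k`, if some `y` makes `x = x₀ + Z_k y` satisfy `A x = b`,
then `h_{k+1,k} = 0`. -/
theorem fgmres_breakdown_converse {m n k : ℕ} (hk : 0 < k)
    (A : Matrix (Fin m) (Fin n) ℝ) (b : Fin m → ℝ) (x₀ : Fin n → ℝ)
    (r₀ : Fin m → ℝ) (β : ℝ)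
    (hr₀ : r₀ = b - A.mulVec x₀) (hβ : β = euclNorm r₀) (hβ0 : β ≠ 0)
    (Z : Matrix (Fin n) (Fin k) ℝ) (V : Matrix (Fin m) (Fin (k + 1)) ℝ)
    (Hbar : Matrix (Fin (k + 1)) (Fin k) ℝ)
    (hVtV : Vᵀ * V = 1)
    (hv₁ : ∀ i, V i 0 = r₀ i / β)
    (hHess : ∀ (i : Fin (k + 1)) (j : Fin k), (j : ℕ) + 1 < (i : ℕ) → Hbar i j = 0)
    (hsub : ∀ (i : Fin (k + 1)) (j : Fin k),
      (i : ℕ) = (j : ℕ) + 1 → (j : ℕ) + 1 < k → Hbar i j ≠ 0)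
    (hAZ : A * Z = V * Hbar)
    (y : Fin k → ℝ) (hx : A.mulVec (x₀ + Z.mulVec y) = b) :
    Hbar (Fin.last k) ⟨k - 1, by omega⟩ = 0 := by
  by_contra hne
  -- r₀ = β • V column 0
  have hrv : ∀ j, r₀ j = β * V j 0 := by
    intro j; rw [hv₁]; field_simp
  -- A (Z y) = r₀
  have hr : A.mulVec (Z.mulVec y) = r₀ := by
    rw [hr₀]
    rw [Matrix.mulVec_add] at hx
    funext i
    have := congrFun hx i
    simp only [Pi.add_apply, Pi.sub_apply] at *
    linarith
  have hVc : V.mulVec (Hbar.mulVec y) = r₀ := by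
    rw [Matrix.mulVec_mulVec, ← hAZ, ← Matrix.mulVec_mulVec, hr]
  -- Hbar y = β e₀
  have hc : Hbar.mulVec y = fun i => if i = 0 then β else 0 := by
    have h1 : Vᵀ.mulVec (V.mulVec (Hbar.mulVec y)) = Hbar.mulVec y := by
      rw [Matrix.mulVec_mulVec, hVtV, Matrix.one_mulVec]
    rw [hVc] at h1
    funext i
    rw [← h1]
    have h2 : Vᵀ.mulVec r₀ i = β * (Vᵀ * V) i 0 := by
      simp only [Matrix.mulVec, Matrix.mul_apply, dotProduct, Matrix.transpose_apply,
        Finset.mul_sum]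
      congr 1; funext j; rw [hrv j]; ring
    rw [h2, hVtV]
    by_cases hi : i = 0 <;> simp [hi, Matrix.one_apply]
  -- the key induction: y vanishes
  have hy : ∀ d : ℕ, ∀ j : Fin k, k ≤ (j : ℕ) + 1 + d → y j = 0 := by
    intro d
    induction d with
    | zero =>
      intro j hj
      have hj' : j = (⟨k - 1, by omega⟩ : Fin k) := by
        apply Fin.ext; show (j : ℕ) = k - 1; omega
      have hrow : ∑ j', Hbar (Fin.last k) j' * y j' = 0 := by
        have := congrFun hc (Fin.last k)
        simp only [Matrix.mulVec, dotProduct] at this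
        rw [this]
        have : Fin.last k ≠ 0 := by
          simp [Fin.ext_iff]; omega
        simp [this]
      rw [Finset.sum_eq_single j] at hrow
      · rw [hj'] at hrow ⊢
        exact (mul_eq_zero.mp hrow).resolve_left hne
      · intro j' _ hj'ne
        have : (j' : ℕ) + 1 < k := by
          have := Fin.val_ne_of_ne hj'ne
          have := j'.isLt
          omega
        rw [hHess (Fin.last k) j' (by simp; omega), zero_mul]
      · intro h; exact absurd (Finset.mem_univ j) h
    | succ d ih =>
      intro j hj
      by_cases h' : k ≤ (j : ℕ) + 1 + d
      · exact ih j h'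
      · have hjk : (j : ℕ) + 1 < k := by omega
        have hi : (j : ℕ) + 1 < k + 1 := by omega
        set i : Fin (k + 1) := ⟨(j : ℕ) + 1, hi⟩ with hidef
        have hrow : ∑ j', Hbar i j' * y j' = 0 := by
          have := congrFun hc i
          simp only [Matrix.mulVec, dotProduct] at this
          rw [this]
          have : i ≠ 0 := by simp [hidef, Fin.ext_iff]
          simp [this]
        rw [Finset.sum_eq_single j] at hrow
        · have hHne : Hbar i j ≠ 0 := hsub i j rfl hjk
          exact (mul_eq_zero.mp hrow).resolve_left hHne
        · intro j' _ hj'ne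
          rcases lt_or_gt_of_ne (Fin.val_ne_of_ne hj'ne) with hlt | hgt
          · rw [hHess i j' (by simp [hidef]; omega), zero_mul]
          · rw [ih j' (by omega), mul_zero]
        · intro h; exact absurd (Finset.mem_univ j) h
  -- row 0 gives β = 0
  have hrow0 : ∑ j', Hbar 0 j' * y j' = β := by
    have := congrFun hc 0
    simp only [Matrix.mulVec, dotProduct] at this
    rw [this]; simp
  rw [Finset.sum_eq_zero (fun j' _ => by rw [hy k j' (by omega), mul_zero])] at hrow0
  exact hβ0 hrow0.symm
end
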